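/- Let T, T₀ : ℝⁿ → ℝⁿ be linear maps and m ≥ 1 an integer. If T^m = 0 and g_T ⇝ g_{T₀}, then T₀^m = 0. -/

import Mathlib

open Filter Topology

/-- `bg₀` (a bracket on `W`) is a contraction of `bg` (a bracket on `V`). -/
def IsContractionOf {V W : Type*} [AddCommGroup V] [Module ℝ V]
    [AddCommGroup W] [Module ℝ W] [TopologicalSpace W]
    (bg : V → V → V) (bg₀ : W → W → W) : Prop :=
  ∃ I : Set ℝ, (𝓝[I \ {0}] (0 : ℝ)).NeBot ∧
    ∃ C : ℝ → (W ≃ₗ[ℝ] V), ∀ x y : W,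
      Tendsto (fun r => (C r).symm (bg (C r x) (C r y))) (𝓝[I \ {0}] (0 : ℝ)) (𝓝 (bg₀ x y))

/-- The bracket of the semidirect product Lie algebra `g_T = ℝ ⋉_T ℝⁿ`:
`[(a, v), (b, w)] = (0, a • T w - b • T v)`. -/
noncomputable def gTBracket {n : ℕ} (T : Matrix (Fin n) (Fin n) ℝ) :
    (ℝ × (Fin n → ℝ)) → (ℝ × (Fin n → ℝ)) → (ℝ × (Fin n → ℝ)) :=
  fun x y => (0, x.1 • T.mulVec y.2 - y.1 • T.mulVec x.2)

/-- The similarity orbit `S(T) = {A T A⁻¹ : A ∈ GL(n, ℝ)}`. -/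
def simOrbit {n : ℕ} (T : Matrix (Fin n) (Fin n) ℝ) : Set (Matrix (Fin n) (Fin n) ℝ) :=
  {S | ∃ A : Matrix (Fin n) (Fin n) ℝ, IsUnit A ∧ S = A * T * A⁻¹}

/-- The double cone `C(T) = ⋃_{λ ∈ ℝ} λ • S(T)` generated by the similarity orbit. -/
def doubleCone {n : ℕ} (T : Matrix (Fin n) (Fin n) ℝ) : Set (Matrix (Fin n) (Fin n) ℝ) :=
  {S | ∃ lam : ℝ, ∃ X ∈ simOrbit T, S = lam • X}

/-- The two brackets are isomorphic as Lie algebras: there is an invertible linear map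
intertwining them. -/
def BracketIso {V W : Type*} [AddCommGroup V] [Module ℝ V] [AddCommGroup W] [Module ℝ W]
    (bv : V → V → V) (bw : W → W → W) : Prop :=
  ∃ D : V ≃ₗ[ℝ] W, ∀ x y : V, D (bv x y) = bw (D x) (D y)

/-- `ad` of `u` in `g_T`, as a linear map in the second argument. -/
noncomputable def adL {n : ℕ} (T : Matrix (Fin n) (Fin n) ℝ) (u : ℝ × (Fin n → ℝ)) :
    (ℝ × (Fin n → ℝ)) →ₗ[ℝ] (ℝ × (Fin n → ℝ)) where
  toFun v := gTBracket T u v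
  map_add' v w := by
    simp only [gTBracket, Prod.mk_add_mk, Prod.fst_add, Prod.snd_add, Prod.mk.injEq,
      Matrix.mulVec_add, add_zero, smul_add, add_smul]
    constructor
    · trivial
    · abel
  map_smul' c v := by
    simp only [gTBracket, Prod.smul_mk, Prod.smul_fst, Prod.smul_snd, RingHom.id_apply,
      Matrix.mulVec_smul, smul_smul, smul_sub, Prod.mk.injEq, smul_zero, smul_eq_mul]
    constructor
    · ring
    · rw [mul_comm]

lemma adL_pow {n : ℕ} (T : Matrix (Fin n) (Fin n) ℝ) (u z : ℝ × (Fin n → ℝ)) (k : ℕ) :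
    ((adL T u) ^ (k + 1)) z =
      (0, u.1 ^ k • ((T ^ (k + 1)).mulVec (u.1 • z.2 - z.1 • u.2))) := by
  induction k with
  | zero =>
    simp [adL, gTBracket, pow_one, Matrix.mulVec_sub, Matrix.mulVec_smul, smul_sub]
  | succ k ih =>
    rw [pow_succ', Module.End.mul_apply, ih]
    simp only [adL, gTBracket, LinearMap.coe_mk, AddHom.coe_mk, smul_zero, zero_smul, sub_zero,
      Matrix.mulVec_smul]
    rw [Matrix.mulVec_mulVec, ← pow_succ']
    simp [smul_smul, pow_succ, mul_comm]

/-- Decomposition of a vector in `ℝ × (Fin n → ℝ)` over the obvious basis. -/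
lemma vec_decomp {n : ℕ} (v : ℝ × (Fin n → ℝ)) :
    v = v.1 • ((1 : ℝ), (0 : Fin n → ℝ))
      + ∑ i, v.2 i • (((0 : ℝ), Pi.single i (1 : ℝ)) : ℝ × (Fin n → ℝ)) := by
  have h2 : ∑ i, v.2 i • (Pi.single i (1 : ℝ) : Fin n → ℝ) = v.2 := by
    have := Finset.univ_sum_single v.2
    rw [← this]
    refine Finset.sum_congr rfl fun i _ => ?_
    ext j
    by_cases hij : j = i <;> simp [Pi.single_apply, hij]
  refine Prod.ext ?_ ?_
  · simp [Prod.fst_sum]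
  · simp [Prod.snd_sum, h2]

/-- Evaluation of pointwise-converging linear maps at a converging vector converges. -/
lemma tendsto_linear_apply {n : ℕ} {l : Filter ℝ}
    (L : ℝ → ((ℝ × (Fin n → ℝ)) →ₗ[ℝ] (ℝ × (Fin n → ℝ))))
    (A : (ℝ × (Fin n → ℝ)) →ₗ[ℝ] (ℝ × (Fin n → ℝ)))
    (hpt : ∀ w, Tendsto (fun r => L r w) l (𝓝 (A w)))
    {z : ℝ → ℝ × (Fin n → ℝ)} {z₀ : ℝ × (Fin n → ℝ)} (hz : Tendsto z l (𝓝 z₀)) :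
    Tendsto (fun r => L r (z r)) l (𝓝 (A z₀)) := by
  have key : ∀ (B : (ℝ × (Fin n → ℝ)) →ₗ[ℝ] (ℝ × (Fin n → ℝ))) (v : ℝ × (Fin n → ℝ)),
      B v = v.1 • B ((1 : ℝ), (0 : Fin n → ℝ))
        + ∑ i, v.2 i • B (((0 : ℝ), Pi.single i (1 : ℝ)) : ℝ × (Fin n → ℝ)) := by
    intro B v
    conv_lhs => rw [vec_decomp v]
    rw [map_add, map_sum]
    simp_rw [map_smul]
  have h1 : Tendsto (fun r => (z r).1) l (𝓝 z₀.1) :=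
    (continuous_fst.tendsto _).comp hz
  have h2 : ∀ i, Tendsto (fun r => (z r).2 i) l (𝓝 (z₀.2 i)) := fun i =>
    ((continuous_apply i).comp continuous_snd).tendsto _ |>.comp hz
  have := (h1.smul (hpt ((1 : ℝ), (0 : Fin n → ℝ)))).add
    (tendsto_finset_sum Finset.univ
      (fun i _ => (h2 i).smul (hpt (((0 : ℝ), Pi.single i (1 : ℝ)) : ℝ × (Fin n → ℝ)))))
  rw [key A z₀]
  refine this.congr fun r => ?_
  rw [← key (L r) (z r)]

/-- If `T^m = 0` (`m ≥ 1`) and `g_T ⇝ g_{T₀}`, then `T₀^m = 0`. -/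
theorem pow_eq_zero_of_isContractionOf {n : ℕ}
    (T T₀ : Matrix (Fin n) (Fin n) ℝ) (m : ℕ) (hm : 1 ≤ m) (hT : T ^ m = 0)
    (h : IsContractionOf (gTBracket T) (gTBracket T₀)) :
    T₀ ^ m = 0 := by
  obtain ⟨I, hne, C, hC⟩ := h
  set l := 𝓝[I \ {0}] (0 : ℝ) with hl
  set e₀ : ℝ × (Fin n → ℝ) := ((1 : ℝ), (0 : Fin n → ℝ)) with he₀
  -- the conjugated linear maps
  set L : ℝ → ((ℝ × (Fin n → ℝ)) →ₗ[ℝ] (ℝ × (Fin n → ℝ))) :=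
    fun r => (C r).symm.toLinearMap ∘ₗ (adL T (C r e₀)) ∘ₗ (C r).toLinearMap with hL
  set A : (ℝ × (Fin n → ℝ)) →ₗ[ℝ] (ℝ × (Fin n → ℝ)) := adL T₀ e₀ with hA
  have hpt : ∀ w, Tendsto (fun r => L r w) l (𝓝 (A w)) := by
    intro w
    simpa [hL, hA, adL] using hC e₀ w
  -- powers of `L r` as conjugates
  have hconj : ∀ r k (y : ℝ × (Fin n → ℝ)),
      ((L r) ^ k) y = (C r).symm (((adL T (C r e₀)) ^ k) (C r y)) := by
    intro r k
    induction k with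
    | zero => intro y; simp
    | succ k ih =>
      intro y
      rw [pow_succ, Module.End.mul_apply, ih, pow_succ, Module.End.mul_apply]
      simp [hL]
  -- `(L r)^m = 0`
  have hLm : ∀ r (y : ℝ × (Fin n → ℝ)), ((L r) ^ m) y = 0 := by
    intro r y
    obtain ⟨k, rfl⟩ : ∃ k, m = k + 1 := ⟨m - 1, (Nat.succ_pred_eq_of_pos hm).symm⟩
    rw [hconj, adL_pow, hT]
    simp
  -- the powers converge pointwise
  have hpow : ∀ k (y : ℝ × (Fin n → ℝ)),
      Tendsto (fun r => ((L r) ^ k) y) l (𝓝 ((A ^ k) y)) := by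
    intro k
    induction k with
    | zero => intro y; simp [tendsto_const_nhds]
    | succ k ih =>
      intro y
      have : Tendsto (fun r => L r (((L r) ^ k) y)) l (𝓝 (A ((A ^ k) y))) :=
        tendsto_linear_apply L A hpt (ih y)
      have hA2 : (A ^ (k + 1)) y = A ((A ^ k) y) := by rw [pow_succ', Module.End.mul_apply]
      rw [hA2]
      exact this.congr fun r => by rw [pow_succ', Module.End.mul_apply]
  -- so `A^m = 0`
  have hAm : ∀ y : ℝ × (Fin n → ℝ), (A ^ m) y = 0 := by
    intro y
    have h1 := hpow m y
    have h2 : Tendsto (fun r => ((L r) ^ m) y) l (𝓝 0) := by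
      simpa [hLm] using (tendsto_const_nhds : Tendsto (fun _ : ℝ => (0 : ℝ × (Fin n → ℝ))) l _)
    haveI : l.NeBot := hne
    exact (tendsto_nhds_unique h1 h2)
  -- conclude `T₀^m = 0`
  obtain ⟨k, rfl⟩ : ∃ k, m = k + 1 := ⟨m - 1, (Nat.succ_pred_eq_of_pos hm).symm⟩
  ext i j
  have := hAm ((0 : ℝ), Pi.single j (1 : ℝ))
  rw [hA, adL_pow] at this
  have h2 := congrFun (congrArg Prod.snd this) i
  simpa [he₀, Matrix.mulVec_single] using h2
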